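/- Let G be a finite group and H a subgroup of G. Then AD(H) ≤ AD(G). -/

import Mathlib

noncomputable section

/-- The set of irreducible complex characters of a group `G`: the characters of
simple (irreducible) finite-dimensional complex representations of `G`. -/
def Irr (G : Type) [Group G] : Set (G → ℂ) :=
  {χ | ∃ V : FDRep ℂ G, CategoryTheory.Simple V ∧ χ = FDRep.character V}

/-- The degree of a character: its value at the identity (a real number, since the value
at the identity is the dimension of the underlying representation). -/
def deg {G : Type} [Group G] (χ : G → ℂ) : ℝ := (χ 1).re

/-- The Fourier antidiagonal constant `AD(G) = |G|⁻¹ ∑_{φ ∈ Irr(G)} d(φ)³`. -/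
def AD (G : Type) [Group G] : ℝ :=
  (1 / Nat.card G) * ∑ᶠ χ ∈ Irr G, deg χ ^ 3

namespace ADProof

open FDRep Module CategoryTheory

variable {K : Type} [Group K] [Fintype K]

/-- averaged inner product of two functions -/
def inn (K : Type) [Group K] [Fintype K] (f g : K → ℂ) : ℂ :=
  (Fintype.card K : ℂ)⁻¹ * ∑ x : K, f x * g x⁻¹

def card_inv : Invertible ((Fintype.card K : ℂ)) :=
  invertibleOfNonzero (Nat.cast_ne_zero.2 Fintype.card_ne_zero)

open scoped Classical in
lemma inn_orth {V W : FDRep ℂ K} [Simple V] [Simple W] :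
    inn K V.character W.character = if Nonempty (V ≅ W) then 1 else 0 := by
  have h := FDRep.char_orthonormal (k := ℂ) (G := K) V W
  simpa [inn, smul_eq_mul, Nat.card_eq_fintype_card] using h


lemma inn_irr_self {χ : K → ℂ} (h : χ ∈ Irr K) : inn K χ χ = 1 := by
  obtain ⟨V, hV, rfl⟩ := h
  haveI := hV
  have := inn_orth (V := V) (W := V)
  rwa [if_pos ⟨Iso.refl V⟩] at this

lemma inn_irr_ne {χ φ : K → ℂ} (hχ : χ ∈ Irr K) (hφ : φ ∈ Irr K) (h : χ ≠ φ) :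
    inn K χ φ = 0 := by
  obtain ⟨V, hV, rfl⟩ := hχ
  obtain ⟨W, hW, rfl⟩ := hφ
  haveI := hV; haveI := hW
  have horth := inn_orth (V := V) (W := W)
  rw [if_neg] at horth
  · exact horth
  · rintro ⟨i⟩
    exact h (FDRep.char_iso i)

lemma inn_sum_left {ι : Type*} (s : Finset ι) (u : ι → K → ℂ) (φ : K → ℂ) :
    inn K (∑ i ∈ s, u i) φ = ∑ i ∈ s, inn K (u i) φ := by
  simp only [inn, Finset.sum_apply, Finset.sum_mul, Finset.mul_sum]
  rw [Finset.sum_comm]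

lemma inn_smul_left (c : ℂ) (f φ : K → ℂ) : inn K (c • f) φ = c * inn K f φ := by
  simp only [inn, Pi.smul_apply, smul_eq_mul, Finset.mul_sum]
  ring_nf

open scoped Classical in
lemma inn_extract (s : Finset (K → ℂ)) (hs : ↑s ⊆ Irr K) (c : (K → ℂ) → ℂ)
    {φ : K → ℂ} (hφ : φ ∈ Irr K) :
    inn K (∑ χ ∈ s, c χ • χ) φ = if φ ∈ s then c φ else 0 := by
  rw [inn_sum_left]
  have : ∀ χ ∈ s, inn K (c χ • χ) φ = if χ = φ then c χ else 0 := by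
    intro χ hχ
    rw [inn_smul_left]
    by_cases hh : χ = φ
    · subst hh; rw [inn_irr_self (hs hχ), if_pos rfl, mul_one]
    · rw [inn_irr_ne (hs hχ) hφ hh, if_neg hh, mul_zero]
  rw [Finset.sum_congr rfl this]
  by_cases hφs : φ ∈ s
  · rw [Finset.sum_ite_eq' s φ (fun χ => c χ), if_pos hφs]
  · rw [if_neg hφs, Finset.sum_eq_zero]
    intro χ hχ
    rw [if_neg]; rintro rfl; exact hφs hχ

lemma irr_finite : (Irr K).Finite := by
  have hli : LinearIndependent ℂ (fun χ : Irr K => (χ : K → ℂ)) := by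
    rw [linearIndependent_iff']
    intro s g hsum i hi
    have h0 : inn K (∑ j ∈ s, g j • (j : K → ℂ)) (i : K → ℂ) = 0 := by
      rw [hsum]; simp [inn]
    rw [inn_sum_left] at h0
    have : ∀ j ∈ s, inn K (g j • (j : K → ℂ)) (i : K → ℂ)
        = if j = i then g j else 0 := by
      intro j hj
      rw [inn_smul_left]
      by_cases hh : j = i
      · subst hh; rw [inn_irr_self j.2, if_pos rfl, mul_one]
      · rw [inn_irr_ne j.2 i.2 (fun hc => hh (Subtype.ext hc)), if_neg hh, mul_zero]
    rw [Finset.sum_congr rfl this, Finset.sum_ite_eq' s i g, if_pos hi] at h0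
    exact h0
  exact hli.setFinite

section Decomp

variable {V : Type} [AddCommGroup V] [Module ℂ V] [FiniteDimensional ℂ V]

lemma char_of (ρ : Representation ℂ K V) (g : K) :
    (FDRep.of ρ).character g = LinearMap.trace ℂ V (ρ g) := rfl

/-- restriction of a representation to an invariant submodule -/
def resRep (ρ : Representation ℂ K V) (p : Submodule ℂ V)
    (hp : ∀ g : K, ∀ x ∈ p, ρ g x ∈ p) : Representation ℂ K p where
  toFun g := (ρ g).restrict (fun x hx => hp g x hx)
  map_one' := by ext x; simp [LinearMap.restrict_apply]
  map_mul' g h := by ext x; simp [LinearMap.restrict_apply]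

lemma exists_invariant_compl (ρ : Representation ℂ K V) (p : Submodule ℂ V)
    (hp : ∀ g : K, ∀ x ∈ p, ρ g x ∈ p) :
    ∃ q : Submodule ℂ V, (∀ g : K, ∀ x ∈ q, ρ g x ∈ q) ∧ IsCompl p q := by
  obtain ⟨q0, hq0⟩ := Submodule.exists_isCompl p
  set π0 : V →ₗ[ℂ] V := p.subtype ∘ₗ (p.linearProjOfIsCompl q0 hq0) with hπ0
  have hπ0_mem : ∀ v, π0 v ∈ p := fun v => (p.linearProjOfIsCompl q0 hq0 v).2
  have hπ0_id : ∀ v ∈ p, π0 v = v := by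
    intro v hv
    have : p.linearProjOfIsCompl q0 hq0 v = ⟨v, hv⟩ :=
      Submodule.linearProjOfIsCompl_apply_left hq0 ⟨v, hv⟩
    simp [hπ0, this]
  set π : V →ₗ[ℂ] V :=
    (Fintype.card K : ℂ)⁻¹ • ∑ g : K, (ρ g⁻¹) ∘ₗ π0 ∘ₗ (ρ g) with hπ
  have hρρ : ∀ (g : K) (v : V), ρ g⁻¹ (ρ g v) = v := by
    intro g v
    have := LinearMap.congr_fun (((map_mul ρ g⁻¹ g)).symm) v
    simpa using this
  have hπ_mem : ∀ v, π v ∈ p := by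
    intro v
    rw [hπ]
    simp only [LinearMap.smul_apply, LinearMap.sum_apply, LinearMap.comp_apply]
    exact Submodule.smul_mem p _ (Submodule.sum_mem p
      (fun g _ => hp g⁻¹ _ (hπ0_mem _)))
  have hπ_id : ∀ v ∈ p, π v = v := by
    intro v hv
    rw [hπ]
    simp only [LinearMap.smul_apply, LinearMap.sum_apply, LinearMap.comp_apply]
    have : ∀ g : K, ρ g⁻¹ (π0 (ρ g v)) = v := by
      intro g
      rw [hπ0_id _ (hp g v hv), hρρ]
    rw [Finset.sum_congr rfl (fun g _ => this g), Finset.sum_const, Finset.card_univ,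
      ← Nat.cast_smul_eq_nsmul ℂ, smul_smul,
      inv_mul_cancel₀ (Nat.cast_ne_zero.2 Fintype.card_ne_zero), one_smul]
  have hcomp : ∀ (a b : K) (w : V), ρ a (ρ b w) = ρ (a * b) w := by
    intro a b w
    have := LinearMap.congr_fun (map_mul ρ a b) w
    simpa using this.symm
  have hπ_comm : ∀ (h : K) (v : V), π (ρ h v) = ρ h (π v) := by
    intro h v
    rw [hπ]
    simp only [LinearMap.smul_apply, LinearMap.sum_apply, LinearMap.comp_apply, map_smul,
      map_sum]
    congr 1
    have key : ∀ g : K, ρ g⁻¹ (π0 (ρ g (ρ h v)))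
        = ρ h (ρ ((g * h))⁻¹ (π0 (ρ (g * h) v))) := by
      intro g
      rw [hcomp g h v, hcomp h (g*h)⁻¹ _]
      congr 1
      group
    rw [Finset.sum_congr rfl (fun g _ => key g)]
    exact Fintype.sum_equiv (Equiv.mulRight h) _ _ (fun g => rfl)
  refine ⟨LinearMap.ker π, ?_, ?_⟩
  · intro g v hv
    rw [LinearMap.mem_ker] at hv ⊢
    rw [hπ_comm, hv, map_zero]
  · constructor
    · rw [disjoint_iff_inf_le]
      rintro v ⟨hvp, hvk⟩
      have : π v = 0 := hvk
      rw [hπ_id v hvp] at this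
      simpa using this
    · rw [codisjoint_iff_le_sup]
      intro v _
      have h1 : π (v - π v) = 0 := by
        rw [map_sub, hπ_id _ (hπ_mem v), sub_self]
      exact Submodule.mem_sup.2 ⟨π v, hπ_mem v, v - π v, h1, by abel⟩

lemma char_isCompl (ρ : Representation ℂ K V) (p q : Submodule ℂ V)
    (hp : ∀ g : K, ∀ x ∈ p, ρ g x ∈ p) (hq : ∀ g : K, ∀ x ∈ q, ρ g x ∈ q)
    (h : IsCompl p q) (g : K) :
    LinearMap.trace ℂ V (ρ g) =
      LinearMap.trace ℂ p ((resRep ρ p hp) g) + LinearMap.trace ℂ q ((resRep ρ q hq) g) := by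
  set e := Submodule.prodEquivOfIsCompl p q h with he
  have key : ρ g = e.conj (LinearMap.prodMap ((resRep ρ p hp) g) ((resRep ρ q hq) g)) := by
    apply LinearMap.ext
    intro v
    obtain ⟨x, rfl⟩ := e.surjective v
    rw [LinearEquiv.conj_apply]
    simp only [LinearMap.comp_apply, LinearEquiv.coe_coe, LinearEquiv.symm_apply_apply]
    obtain ⟨a, b⟩ := x
    have hea : e (a, b) = (a : V) + (b : V) := rfl
    rw [hea]
    have : e ((LinearMap.prodMap ((resRep ρ p hp) g) ((resRep ρ q hq) g)) (a, b))
        = ((resRep ρ p hp) g a : V) + ((resRep ρ q hq) g b : V) := rfl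
    rw [this]
    simp only [resRep, MonoidHom.coe_mk, OneHom.coe_mk, LinearMap.restrict_coe_apply]
    rw [map_add]
  rw [key, LinearMap.trace_conj', LinearMap.trace_prodMap']

lemma comm_apply {Y X : FDRep ℂ K} (f : Y ⟶ X) (g : K) (y : Y) :
    f.hom (Y.ρ g y) = X.ρ g (f.hom y) := by
  have := f.comm g
  have h2 := ConcreteCategory.congr_hom this y
  exact h2

lemma simple_of_irreducible (X : FDRep ℂ K) (hnt : Nontrivial X)
    (hirr : ∀ p : Submodule ℂ X, (∀ g : K, ∀ x ∈ p, X.ρ g x ∈ p) → p = ⊥ ∨ p = ⊤) :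
    Simple X := by
  constructor
  intro Y f hmono
  constructor
  · intro hiso hf0
    obtain ⟨x, y, hxy⟩ := hnt
    haveI := hiso
    have h1 : CategoryTheory.inv f ≫ f = CategoryTheory.inv f ≫ 0 :=
      congrArg (fun u => CategoryTheory.inv f ≫ u) hf0
    rw [IsIso.inv_hom_id, Limits.comp_zero] at h1
    have h2 := congrArg (fun (u : X ⟶ X) => ConcreteCategory.hom u.hom x) h1
    simp only [Action.zero_hom, Action.id_hom] at h2
    have h3 := congrArg (fun (u : X ⟶ X) => ConcreteCategory.hom u.hom y) h1
    simp only [Action.zero_hom, Action.id_hom] at h3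
    have h2' : x = (0 : X) := h2
    have h3' : y = (0 : X) := h3
    exact hxy (h2'.trans h3'.symm)
  · intro hf0
    set F : Y →ₗ[ℂ] X := f.hom.hom.hom with hF
    have hrange : ∀ g : K, ∀ x ∈ LinearMap.range F, X.ρ g x ∈ LinearMap.range F := by
      rintro g x ⟨y, rfl⟩
      exact ⟨Y.ρ g y, comm_apply f g y⟩
    have hrne : LinearMap.range F ≠ ⊥ := by
      intro hb
      apply hf0
      apply Action.Hom.ext
      apply FGModuleCat.hom_ext
      apply LinearMap.ext
      intro y
      have : F y ∈ LinearMap.range F := ⟨y, rfl⟩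
      rw [hb] at this
      simpa using this
    have hrtop : LinearMap.range F = ⊤ := (hirr _ hrange).resolve_left hrne
    have hker : ∀ g : K, ∀ x ∈ LinearMap.ker F, Y.ρ g x ∈ LinearMap.ker F := by
      intro g x hx
      rw [LinearMap.mem_ker] at hx ⊢
      rw [show F ((Y.ρ g) x) = X.ρ g (F x) from comm_apply f g x, hx, map_zero]
    -- inclusion morphism from the kernel subrepresentation
    let ι : FDRep.of (resRep Y.ρ (LinearMap.ker F) hker) ⟶ Y :=
      ⟨FGModuleCat.ofHom ((LinearMap.ker F).subtype : ↥(LinearMap.ker F) →ₗ[ℂ] Y), by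
        intro g
        apply FGModuleCat.hom_ext
        apply LinearMap.ext
        intro x
        rfl⟩
    have hι0 : ι ≫ f = (0 : FDRep.of (resRep Y.ρ (LinearMap.ker F) hker) ⟶ X) := by
      apply Action.Hom.ext
      apply FGModuleCat.hom_ext
      apply LinearMap.ext
      intro x
      exact x.2
    have hι : ι = 0 := by
      have := (cancel_mono (f := f) (g := ι)
        (h := (0 : FDRep.of (resRep Y.ρ (LinearMap.ker F) hker) ⟶ Y))).1
      apply this
      rw [hι0, Limits.zero_comp]
    have hkerbot : LinearMap.ker F = ⊥ := by
      rw [Submodule.eq_bot_iff]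
      intro x hx
      have := congrArg (fun (u : FDRep.of (resRep Y.ρ (LinearMap.ker F) hker) ⟶ Y)
        => u.hom.hom.hom ⟨x, hx⟩) hι
      simp [ι] at this
      exact this
    have hbij : Function.Bijective F :=
      ⟨LinearMap.ker_eq_bot.1 hkerbot, LinearMap.range_eq_top.1 hrtop⟩
    set e := LinearEquiv.ofBijective F hbij with he
    have hcomm : ∀ (g : K) (x : X), e.symm (X.ρ g x) = Y.ρ g (e.symm x) := by
      intro g x
      apply hbij.1
      have h1 : F (e.symm (X.ρ g x)) = X.ρ g x := e.apply_symm_apply _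
      have h2 : F (Y.ρ g (e.symm x)) = X.ρ g (F (e.symm x)) := comm_apply f g _
      rw [h1, h2]
      have h3 : F (e.symm x) = x := e.apply_symm_apply x
      rw [h3]
    refine ⟨⟨⟨FGModuleCat.ofHom (e.symm : X →ₗ[ℂ] Y), ?_⟩, ?_, ?_⟩⟩
    · intro g
      apply FGModuleCat.hom_ext
      apply LinearMap.ext
      intro x
      exact hcomm g x
    · apply Action.Hom.ext
      apply FGModuleCat.hom_ext
      apply LinearMap.ext
      intro y
      exact e.symm_apply_apply y
    · apply Action.Hom.ext
      apply FGModuleCat.hom_ext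
      apply LinearMap.ext
      intro x
      exact e.apply_symm_apply x

lemma nontrivial_of_simple (X : FDRep ℂ K) [hs : Simple X] : Nontrivial X := by
  by_contra h
  rw [not_nontrivial_iff_subsingleton] at h
  have h1 : (𝟙 X : X ⟶ X) = 0 := by
    apply Action.Hom.ext
    apply FGModuleCat.hom_ext
    apply LinearMap.ext
    intro x
    exact @Subsingleton.elim _ h _ _
  exact CategoryTheory.id_nonzero X h1

lemma irr_deg_nat {χ : K → ℂ} (h : χ ∈ Irr K) : ∃ n : ℕ, χ 1 = n ∧ 1 ≤ n := by
  obtain ⟨V, hV, rfl⟩ := h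
  haveI := hV
  haveI : Nontrivial V := nontrivial_of_simple V
  refine ⟨finrank ℂ V, ?_, ?_⟩
  · exact FDRep.char_one V
  · exact Module.finrank_pos

lemma char_eq_zero_of_subsingleton (U : FDRep ℂ K) (h : Subsingleton U) :
    U.character = 0 := by
  funext g
  have : U.ρ g = 0 := by
    apply LinearMap.ext
    intro x
    exact @Subsingleton.elim _ h _ _
  show LinearMap.trace ℂ U (U.ρ g) = 0
  rw [this, map_zero]

lemma exists_decomp_aux : ∀ (n : ℕ) (U : FDRep ℂ K), finrank ℂ U ≤ n →
    ∃ l : List (K → ℂ), (∀ χ ∈ l, χ ∈ Irr K) ∧ U.character = l.sum := by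
  intro n
  induction n with
  | zero =>
    intro U hU
    refine ⟨[], by simp, ?_⟩
    have h0 : finrank ℂ U = 0 := Nat.le_zero.1 hU
    have hss : Subsingleton U := by
      rw [← Module.finrank_zero_iff (R := ℂ)]
      exact h0
    rw [char_eq_zero_of_subsingleton U hss]
    rfl
  | succ n ih =>
    intro U hU
    by_cases hss : Subsingleton U
    · refine ⟨[], by simp, ?_⟩
      rw [char_eq_zero_of_subsingleton U hss]
      rfl
    · have hnt : Nontrivial U := not_subsingleton_iff_nontrivial.1 hss
      -- the set of nonzero invariant submodules
      set S : Set (Submodule ℂ U) :=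
        {p | p ≠ ⊥ ∧ ∀ g : K, ∀ x ∈ p, U.ρ g x ∈ p} with hS
      have hTopS : (⊤ : Submodule ℂ U) ∈ S := by
        constructor
        · intro hbt
          obtain ⟨u, v, huv⟩ := hnt
          apply huv
          have hu : (u : U) ∈ (⊤ : Submodule ℂ U) := trivial
          have hv : (v : U) ∈ (⊤ : Submodule ℂ U) := trivial
          rw [hbt, Submodule.mem_bot] at hu hv
          rw [hu, hv]
        · intro g x _; exact Submodule.mem_top
      -- choose a minimal one
      set T : Set ℕ := (fun p : Submodule ℂ U => finrank ℂ p) '' S with hT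
      have hTne : T.Nonempty := ⟨_, ⟨⊤, hTopS, rfl⟩⟩
      obtain ⟨p, hpS, hpmin⟩ : ∃ p ∈ S, ∀ q ∈ S, finrank ℂ p ≤ finrank ℂ q := by
        obtain ⟨p, hpS, hpr⟩ := Nat.sInf_mem hTne
        refine ⟨p, hpS, fun q hq => ?_⟩
        have hqT : finrank ℂ q ∈ T := ⟨q, hq, rfl⟩
        exact le_trans (le_of_eq hpr) (Nat.sInf_le hqT)
      obtain ⟨hpne, hpinv⟩ := hpS
      -- p as a representation is simple
      set Up : FDRep ℂ K := FDRep.of (resRep U.ρ p hpinv) with hUp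
      haveI hsimple : Simple Up := by
        apply simple_of_irreducible
        · exact (Submodule.nontrivial_iff_ne_bot.2 hpne : Nontrivial p)
        · intro r hr
          by_cases hrb : r.map p.subtype = ⊥
          · left
            rw [Submodule.eq_bot_iff]
            intro x hx
            have hmem : p.subtype x ∈ r.map p.subtype := ⟨x, hx, rfl⟩
            rw [hrb, Submodule.mem_bot] at hmem
            exact Subtype.ext hmem
          · right
            have hrinv : ∀ g : K, ∀ x ∈ r.map p.subtype, U.ρ g x ∈ r.map p.subtype := by
              rintro g x ⟨y, hy, rfl⟩
              refine ⟨(resRep U.ρ p hpinv) g y, hr g y hy, ?_⟩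
              rfl
            have hrS : r.map p.subtype ∈ S := ⟨hrb, hrinv⟩
            have h1 : finrank ℂ p ≤ finrank ℂ (r.map p.subtype) := hpmin _ hrS
            have h2 : finrank ℂ (r.map p.subtype) = finrank ℂ r :=
              Submodule.finrank_map_subtype_eq p r
            have h3 : finrank ℂ r ≤ finrank ℂ Up := Submodule.finrank_le r
            have h4 : finrank ℂ Up = finrank ℂ p := rfl
            apply Submodule.eq_top_of_finrank_eq
            omega
      -- Maschke complement
      obtain ⟨q, hqinv, hcompl⟩ := exists_invariant_compl U.ρ p hpinv
      set Uq : FDRep ℂ K := FDRep.of (resRep U.ρ q hqinv) with hUq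
      have hchar : ∀ g : K, U.character g = Up.character g + Uq.character g := by
        intro g
        exact char_isCompl U.ρ p q hpinv hqinv hcompl g
      have hfrank : finrank ℂ p + finrank ℂ q = finrank ℂ U :=
        Submodule.finrank_add_eq_of_isCompl hcompl
      have hppos : 1 ≤ finrank ℂ p := by
        haveI : Nontrivial p := Submodule.nontrivial_iff_ne_bot.2 hpne
        exact Module.finrank_pos
      have hqle : finrank ℂ Uq ≤ n := by
        have : finrank ℂ Uq = finrank ℂ q := rfl
        omega
      obtain ⟨l, hl, hlsum⟩ := ih Uq hqle
      refine ⟨Up.character :: l, ?_, ?_⟩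
      · intro χ hχ
        rcases List.mem_cons.1 hχ with h | h
        · exact h ▸ ⟨Up, hsimple, rfl⟩
        · exact hl χ h
      · funext g
        rw [List.sum_cons]
        have := hchar g
        rw [this, hlsum]
        rfl

end Decomp

open scoped Classical

def IK (K : Type) [Group K] [Fintype K] : Finset (K → ℂ) := (irr_finite (K := K)).toFinset

lemma mem_IK {χ : K → ℂ} : χ ∈ IK K ↔ χ ∈ Irr K := Set.Finite.mem_toFinset _

lemma char_decomp (U : FDRep ℂ K) :
    (U.character = ∑ χ ∈ IK K, inn K U.character χ • χ) ∧
    (∀ χ ∈ IK K, ∃ n : ℕ, inn K U.character χ = n) := by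
  obtain ⟨l, hl, hsum⟩ := exists_decomp_aux (finrank ℂ U) U le_rfl
  have hls : l.sum = ∑ χ ∈ l.toFinset, (l.count χ : ℂ) • χ := by
    have h0 := Finset.sum_list_map_count l (id : (K → ℂ) → (K → ℂ))
    rw [List.map_id] at h0
    rw [h0]
    apply Finset.sum_congr rfl
    intro χ _
    rw [Nat.cast_smul_eq_nsmul]
    rfl
  have hsub : l.toFinset ⊆ IK K := fun χ hχ => mem_IK.2 (hl χ (List.mem_toFinset.1 hχ))
  have hsub' : ↑l.toFinset ⊆ Irr K := fun χ hχ => hl χ (List.mem_toFinset.1 hχ)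
  have hinn : ∀ φ ∈ IK K, inn K U.character φ
      = if φ ∈ l.toFinset then (l.count φ : ℂ) else 0 := by
    intro φ hφ
    rw [hsum, hls]
    exact inn_extract l.toFinset hsub' (fun χ => (l.count χ : ℂ)) (mem_IK.1 hφ)
  constructor
  · have target : ∑ χ ∈ IK K, inn K U.character χ • χ = ∑ χ ∈ l.toFinset, (l.count χ : ℂ) • χ := by
      rw [← Finset.sum_subset hsub (fun χ hχ hnχ => by rw [hinn χ hχ, if_neg hnχ, zero_smul])]
      apply Finset.sum_congr rfl
      intro χ hχ
      rw [hinn χ (hsub hχ), if_pos hχ]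
    rw [target, ← hls, hsum]
  · intro χ hχ
    by_cases h : χ ∈ l.toFinset
    · exact ⟨l.count χ, by rw [hinn χ hχ, if_pos h]⟩
    · exact ⟨0, by rw [hinn χ hχ, if_neg h, Nat.cast_zero]⟩

/-- the (left) regular representation on `K → ℂ` -/
def regρ (K : Type) [Group K] [Fintype K] : Representation ℂ K (K → ℂ) where
  toFun g := LinearMap.funLeft ℂ ℂ (fun x => g⁻¹ * x)
  map_one' := by
    apply LinearMap.ext; intro f; funext x
    simp [LinearMap.funLeft_apply]
  map_mul' g h := by
    apply LinearMap.ext; intro f; funext x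
    simp [LinearMap.funLeft_apply, mul_assoc]

lemma char_regRep (g : K) :
    (FDRep.of (regρ K)).character g = if g = 1 then (Fintype.card K : ℂ) else 0 := by
  rw [char_of]
  rw [LinearMap.trace_eq_matrix_trace ℂ (Pi.basisFun ℂ K)]
  have hentry : ∀ i : K,
      (LinearMap.toMatrix (Pi.basisFun ℂ K) (Pi.basisFun ℂ K) ((regρ K) g)) i i
      = if g = 1 then 1 else 0 := by
    intro i
    rw [LinearMap.toMatrix_apply]
    simp only [Pi.basisFun_apply, Pi.basisFun_repr, regρ, MonoidHom.coe_mk, OneHom.coe_mk,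
      LinearMap.funLeft_apply]
    rw [Pi.single_apply]
    by_cases hg : g = 1
    · subst hg; simp
    · rw [if_neg hg, if_neg]
      intro hc
      apply hg
      have h2 : g⁻¹ * i = 1 * i := by rw [one_mul, hc]
      have h3 := mul_right_cancel h2
      rw [← inv_inv g, h3, inv_one]
  rw [Matrix.trace]
  simp only [Matrix.diag]
  rw [Finset.sum_congr rfl (fun i _ => hentry i)]
  by_cases hg : g = 1
  · simp [hg, Finset.card_univ]
  · simp [hg]

section Endgame

variable (G : Type) [Group G] [Fintype G] (H : Subgroup G) [Fintype ↥H]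

lemma resA {χ : G → ℂ} (hχ : χ ∈ Irr G) :
    ((fun h : ↥H => χ (h : G)) = ∑ φ ∈ IK ↥H, inn ↥H (fun h : ↥H => χ (h : G)) φ • φ) ∧
    (∀ φ ∈ IK ↥H, ∃ n : ℕ, inn ↥H (fun h : ↥H => χ (h : G)) φ = n) := by
  obtain ⟨V, hV, rfl⟩ := hχ
  have hres : (FDRep.of (V.ρ.comp H.subtype)).character
      = fun h : ↥H => V.character (h : G) := rfl
  have := char_decomp (FDRep.of (V.ρ.comp H.subtype))
  rw [hres] at this
  exact this

lemma regsum (g : G) :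
    (∑ χ ∈ IK G, χ 1 * χ g) = if g = 1 then (Fintype.card G : ℂ) else 0 := by
  obtain ⟨hdec, _⟩ := char_decomp (FDRep.of (regρ G))
  have hinn : ∀ χ ∈ IK G, inn G (FDRep.of (regρ G)).character χ = χ 1 := by
    intro χ hχ
    unfold inn
    have : ∀ x : G, (FDRep.of (regρ G)).character x * χ x⁻¹
        = if x = 1 then (Fintype.card G : ℂ) * χ x⁻¹ else 0 := by
      intro x
      rw [char_regRep]
      by_cases hx : x = 1
      · rw [if_pos hx, if_pos hx]
      · rw [if_neg hx, if_neg hx, zero_mul]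
    rw [Finset.sum_congr rfl (fun x _ => this x), Finset.sum_ite_eq' Finset.univ 1
      (fun x => (Fintype.card G : ℂ) * χ x⁻¹), if_pos (Finset.mem_univ 1), inv_one]
    rw [← mul_assoc, inv_mul_cancel₀ (Nat.cast_ne_zero.2 Fintype.card_ne_zero), one_mul]
  have hg := congrFun hdec g
  rw [char_regRep] at hg
  rw [Finset.sum_apply] at hg
  have : ∀ χ ∈ IK G, (inn G (FDRep.of (regρ G)).character χ • χ) g = χ 1 * χ g := by
    intro χ hχ
    rw [Pi.smul_apply, smul_eq_mul, hinn χ hχ]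
  rw [Finset.sum_congr rfl this] at hg
  exact hg.symm

lemma identB {φ : ↥H → ℂ} (hφ : φ ∈ IK ↥H) :
    (∑ χ ∈ IK G, χ 1 * inn ↥H (fun h : ↥H => χ (h : G)) φ) * (Fintype.card ↥H : ℂ)
      = (Fintype.card G : ℂ) * φ 1 := by
  have key : ∀ χ : G → ℂ, χ 1 * inn ↥H (fun h : ↥H => χ (h : G)) φ * (Fintype.card ↥H : ℂ)
      = ∑ h : ↥H, χ 1 * χ (h : G) * φ h⁻¹ := by
    intro χ
    unfold inn
    rw [mul_comm ((Fintype.card ↥H : ℂ))⁻¹ _, mul_assoc, mul_assoc,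
      inv_mul_cancel₀ (Nat.cast_ne_zero.2 Fintype.card_ne_zero), mul_one, Finset.mul_sum]
    apply Finset.sum_congr rfl
    intro h _
    ring
  rw [Finset.sum_mul, Finset.sum_congr rfl (fun χ _ => key χ), Finset.sum_comm]
  have inner : ∀ h : ↥H, (∑ χ ∈ IK G, χ 1 * χ (h : G) * φ h⁻¹)
      = (if (h : G) = 1 then (Fintype.card G : ℂ) else 0) * φ h⁻¹ := by
    intro h
    rw [← Finset.sum_mul, regsum G]
  rw [Finset.sum_congr rfl (fun h _ => inner h)]
  have : ∀ h : ↥H, (if (h : G) = 1 then (Fintype.card G : ℂ) else 0) * φ h⁻¹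
      = if h = 1 then (Fintype.card G : ℂ) * φ h⁻¹ else 0 := by
    intro h
    by_cases hh : h = 1
    · subst hh; simp
    · rw [if_neg hh, if_neg, zero_mul]
      intro hc
      exact hh (by exact_mod_cast Subtype.ext hc)
  rw [Finset.sum_congr rfl (fun h _ => this h), Finset.sum_ite_eq' Finset.univ 1
    (fun h : ↥H => (Fintype.card G : ℂ) * φ h⁻¹), if_pos (Finset.mem_univ 1), inv_one]

end Endgame

end ADProof

open ADProof in
theorem stmt_13 (G : Type) [Group G] [Finite G] (H : Subgroup G) :
    AD H ≤ AD G := by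
  letI : Fintype G := Fintype.ofFinite G
  letI : Fintype ↥H := Fintype.ofFinite ↥H
  classical
  set IG := IK G with hIG
  set IH := IK ↥H with hIH
  -- degrees
  have hd : ∀ χ ∈ IG, ∃ n : ℕ, χ 1 = n ∧ 1 ≤ n := fun χ hχ => irr_deg_nat (mem_IK.1 hχ)
  choose! dfun hdeq hdpos using hd
  have he : ∀ φ ∈ IH, ∃ n : ℕ, φ 1 = n ∧ 1 ≤ n := fun φ hφ => irr_deg_nat (mem_IK.1 hφ)
  choose! efun heeq hepos using he
  -- multiplicities
  have hm : ∀ χ ∈ IG, ∀ φ ∈ IH, ∃ n : ℕ, inn ↥H (fun h : ↥H => χ (h : G)) φ = n :=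
    fun χ hχ φ hφ => (resA G H (mem_IK.1 hχ)).2 φ hφ
  choose! mfun hmeq using hm
  -- identity (i)
  have hi : ∀ χ ∈ IG, dfun χ = ∑ φ ∈ IH, mfun χ φ * efun φ := by
    intro χ hχ
    have h1 := congrFun (resA G H (mem_IK.1 hχ)).1 (1 : ↥H)
    rw [Finset.sum_apply] at h1
    have h2 : ∀ φ ∈ IH, (inn ↥H (fun h : ↥H => χ (h : G)) φ • φ) 1
        = (mfun χ φ : ℂ) * (efun φ : ℂ) := by
      intro φ hφ
      rw [Pi.smul_apply, smul_eq_mul, hmeq χ hχ φ hφ, heeq φ hφ]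
    rw [Finset.sum_congr rfl h2] at h1
    have hone : ((1 : ↥H) : G) = 1 := rfl
    rw [hone, hdeq χ hχ] at h1
    exact_mod_cast h1
  -- identity (ii)
  have hii : ∀ φ ∈ IH, Fintype.card G * efun φ
      = Fintype.card ↥H * ∑ χ ∈ IG, dfun χ * mfun χ φ := by
    intro φ hφ
    have h1 := identB G H (φ := φ) hφ
    have h2 : ∀ χ ∈ IG, χ 1 * inn ↥H (fun h : ↥H => χ (h : G)) φ
        = (dfun χ : ℂ) * (mfun χ φ : ℂ) := by
      intro χ hχ
      rw [hdeq χ hχ, hmeq χ hχ φ hφ]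
    rw [Finset.sum_congr rfl h2, heeq φ hφ] at h1
    have h3 : ((Fintype.card ↥H * ∑ χ ∈ IG, dfun χ * mfun χ φ : ℕ) : ℂ)
        = ((Fintype.card G * efun φ : ℕ) : ℂ) := by
      push_cast
      rw [← h1]
      ring
    exact_mod_cast h3.symm
  -- (iii)
  have hiii : ∀ χ ∈ IG, ∀ φ ∈ IH, mfun χ φ ≠ 0 → efun φ ≤ dfun χ := by
    intro χ hχ φ hφ hm0
    calc efun φ ≤ mfun χ φ * efun φ := Nat.le_mul_of_pos_left _ (Nat.pos_of_ne_zero hm0)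
    _ ≤ ∑ ψ ∈ IH, mfun χ ψ * efun ψ :=
        Finset.single_le_sum (f := fun ψ => mfun χ ψ * efun ψ) (fun i _ => Nat.zero_le _) hφ
    _ = dfun χ := (hi χ hχ).symm
  -- main natural-number inequality
  have main : Fintype.card G * ∑ φ ∈ IH, efun φ ^ 3
      ≤ Fintype.card ↥H * ∑ χ ∈ IG, dfun χ ^ 3 := by
    have step1 : Fintype.card G * ∑ φ ∈ IH, efun φ ^ 3
        = Fintype.card ↥H * ∑ φ ∈ IH, ∑ χ ∈ IG, efun φ ^ 2 * (dfun χ * mfun χ φ) := by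
      rw [Finset.mul_sum, Finset.mul_sum]
      apply Finset.sum_congr rfl
      intro φ hφ
      calc Fintype.card G * efun φ ^ 3
          = efun φ ^ 2 * (Fintype.card G * efun φ) := by ring
        _ = efun φ ^ 2 * (Fintype.card ↥H * ∑ χ ∈ IG, dfun χ * mfun χ φ) := by
            rw [hii φ hφ]
        _ = Fintype.card ↥H * (efun φ ^ 2 * ∑ χ ∈ IG, dfun χ * mfun χ φ) := by ring
        _ = Fintype.card ↥H * ∑ χ ∈ IG, efun φ ^ 2 * (dfun χ * mfun χ φ) := by
            rw [Finset.mul_sum]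
    have step2 : ∑ φ ∈ IH, ∑ χ ∈ IG, efun φ ^ 2 * (dfun χ * mfun χ φ)
        ≤ ∑ φ ∈ IH, ∑ χ ∈ IG, dfun χ ^ 2 * (efun φ * mfun χ φ) := by
      apply Finset.sum_le_sum
      intro φ hφ
      apply Finset.sum_le_sum
      intro χ hχ
      by_cases h0 : mfun χ φ = 0
      · simp [h0]
      · have hle := hiii χ hχ φ hφ h0
        have e1 : efun φ ^ 2 * (dfun χ * mfun χ φ)
            = (efun φ * dfun χ * mfun χ φ) * efun φ := by ring
        have e2 : dfun χ ^ 2 * (efun φ * mfun χ φ)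
            = (efun φ * dfun χ * mfun χ φ) * dfun χ := by ring
        rw [e1, e2]
        exact Nat.mul_le_mul_left _ hle
    have step3 : ∑ φ ∈ IH, ∑ χ ∈ IG, dfun χ ^ 2 * (efun φ * mfun χ φ)
        = ∑ χ ∈ IG, dfun χ ^ 3 := by
      rw [Finset.sum_comm]
      apply Finset.sum_congr rfl
      intro χ hχ
      calc ∑ φ ∈ IH, dfun χ ^ 2 * (efun φ * mfun χ φ)
          = dfun χ ^ 2 * ∑ φ ∈ IH, mfun χ φ * efun φ := by
            rw [Finset.mul_sum]
            apply Finset.sum_congr rfl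
            intro φ _
            ring
        _ = dfun χ ^ 2 * dfun χ := by rw [← hi χ hχ]
        _ = dfun χ ^ 3 := by ring
    calc Fintype.card G * ∑ φ ∈ IH, efun φ ^ 3
        = Fintype.card ↥H * ∑ φ ∈ IH, ∑ χ ∈ IG, efun φ ^ 2 * (dfun χ * mfun χ φ) := step1
      _ ≤ Fintype.card ↥H * ∑ φ ∈ IH, ∑ χ ∈ IG, dfun χ ^ 2 * (efun φ * mfun χ φ) :=
          Nat.mul_le_mul_left _ step2
      _ = Fintype.card ↥H * ∑ χ ∈ IG, dfun χ ^ 3 := by rw [step3]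
  -- translate to the real statement
  have hsumG : ∑ᶠ χ ∈ Irr G, deg χ ^ 3 = ((∑ χ ∈ IG, dfun χ ^ 3 : ℕ) : ℝ) := by
    have hco : Irr G = (↑IG : Set (G → ℂ)) := (irr_finite (K := G)).coe_toFinset.symm
    rw [hco, finsum_mem_coe_finset]
    push_cast
    apply Finset.sum_congr rfl
    intro χ hχ
    have : deg χ = (dfun χ : ℝ) := by
      unfold deg
      rw [hdeq χ hχ]
      simp
    rw [this]
  have hsumH : ∑ᶠ φ ∈ Irr ↥H, deg φ ^ 3 = ((∑ φ ∈ IH, efun φ ^ 3 : ℕ) : ℝ) := by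
    have hco : Irr ↥H = (↑IH : Set (↥H → ℂ)) := (irr_finite (K := ↥H)).coe_toFinset.symm
    rw [hco, finsum_mem_coe_finset]
    push_cast
    apply Finset.sum_congr rfl
    intro φ hφ
    have : deg φ = (efun φ : ℝ) := by
      unfold deg
      rw [heeq φ hφ]
      simp
    rw [this]
  rw [AD, AD, hsumG, hsumH, Nat.card_eq_fintype_card, Nat.card_eq_fintype_card]
  have hGpos : (0 : ℝ) < (Fintype.card G : ℝ) := by exact_mod_cast Fintype.card_pos
  have hHpos : (0 : ℝ) < (Fintype.card ↥H : ℝ) := by exact_mod_cast Fintype.card_pos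
  rw [div_mul_eq_mul_div, div_mul_eq_mul_div, one_mul, one_mul,
    div_le_div_iff₀ hHpos hGpos]
  have := main
  have hcast : (Fintype.card G : ℝ) * ((∑ φ ∈ IH, efun φ ^ 3 : ℕ) : ℝ)
      ≤ (Fintype.card ↥H : ℝ) * ((∑ χ ∈ IG, dfun χ ^ 3 : ℕ) : ℝ) := by
    exact_mod_cast main
  linarith
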